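/- Let l > 0, let f : ℝ → ℝ be three times differentiable with f(x)² < 1 + l² for all x, let g : ℝ → ℝ be twice differentiable, and let x̃ ∈ ℝ satisfy f(x̃) = l and f'(x̃) = 0. Define A(x) := (1/(1+l²−f(x)²) − 1/(1+f'(x)²))·g(x). Then A is twice differentiable at x̃ and A''(x̃) = 2·f''(x̃)·(l + f''(x̃))·g(x̃). -/

import Mathlib

open Set

/-- at a touching point `f(xt) = l`, `f'(xt) = 0`, the coefficient
`A = (1/(1+l²−f²) − 1/(1+f'²))·g` is twice differentiable with
`A''(xt) = 2·f''(xt)·(l + f''(xt))·g(xt)`. -/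
theorem second_derivative_at_touching_point
    (l : ℝ) (hl : 0 < l) (f g : ℝ → ℝ) (xt : ℝ)
    -- f is three times differentiable
    (hf : Differentiable ℝ f)
    (hf' : Differentiable ℝ (deriv f))
    (hf'' : Differentiable ℝ (deriv (deriv f)))
    -- g is twice differentiable
    (hg : Differentiable ℝ g)
    (hg' : Differentiable ℝ (deriv g))
    -- f² < 1 + l²
    (hbound : ∀ x : ℝ, f x ^ 2 < 1 + l ^ 2)
    -- touching point: f(xt) = l with horizontal tangent
    (htouch : f xt = l) (hslope : deriv f xt = 0) :
    DifferentiableAt ℝ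
        (fun x => (1 / (1 + l ^ 2 - f x ^ 2) - 1 / (1 + deriv f x ^ 2)) * g x) xt ∧
      DifferentiableAt ℝ
        (deriv fun x => (1 / (1 + l ^ 2 - f x ^ 2) - 1 / (1 + deriv f x ^ 2)) * g x) xt ∧
      deriv (deriv fun x => (1 / (1 + l ^ 2 - f x ^ 2) - 1 / (1 + deriv f x ^ 2)) * g x) xt
        = 2 * deriv (deriv f) xt * (l + deriv (deriv f) xt) * g xt := by
  set u : ℝ → ℝ := fun x => 1 + l ^ 2 - f x ^ 2 with hu_def
  set v : ℝ → ℝ := fun x => 1 + deriv f x ^ 2 with hv_def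
  have hu0 : ∀ x, u x ≠ 0 := by
    intro x
    have := hbound x
    simp only [hu_def]
    nlinarith
  have hv0 : ∀ x, v x ≠ 0 := by
    intro x
    simp only [hv_def]
    positivity
  have hU : ∀ x, HasDerivAt u (-(2 * f x * deriv f x)) x := by
    intro x
    have h2 : HasDerivAt (fun y => f y ^ 2) (2 * f x * deriv f x) x := by
      have := (hf x).hasDerivAt.fun_pow 2
      simpa [mul_comm, mul_assoc, mul_left_comm] using this
    simpa using (hasDerivAt_const x (1 + l ^ 2)).fun_sub h2
  have hV : ∀ x, HasDerivAt v (2 * deriv f x * deriv (deriv f) x) x := by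
    intro x
    have h2 : HasDerivAt (fun y => deriv f y ^ 2) (2 * deriv f x * deriv (deriv f) x) x := by
      have := (hf' x).hasDerivAt.fun_pow 2
      simpa [mul_comm, mul_assoc, mul_left_comm] using this
    have := (hasDerivAt_const x (1 : ℝ)).fun_add h2; rw [zero_add] at this; exact this
  have hUinv : ∀ x, HasDerivAt (fun y => (u y)⁻¹) (2 * f x * deriv f x / u x ^ 2) x := by
    intro x
    have h := (hU x).fun_inv (hu0 x)
    exact h.congr_deriv (by ring)
  have hVinv : ∀ x, HasDerivAt (fun y => (v y)⁻¹)
      (-(2 * deriv f x * deriv (deriv f) x) / v x ^ 2) x :=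
    fun x => (hV x).inv (hv0 x)
  set S : ℝ → ℝ := fun x =>
    2 * f x * deriv f x / u x ^ 2 + 2 * deriv f x * deriv (deriv f) x / v x ^ 2 with hS_def
  set T : ℝ → ℝ := fun y => (u y)⁻¹ - (v y)⁻¹ with hT_def
  have hT' : ∀ x, HasDerivAt T (S x) x := by
    intro x
    have h := (hUinv x).fun_sub (hVinv x)
    exact h.congr_deriv (by simp only [hS_def]; ring)
  have hA : ∀ x, HasDerivAt (fun y => T y * g y) (S x * g x + T x * deriv g x) x := by
    intro x
    exact (hT' x).mul (hg x).hasDerivAt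
  have hFeq : (fun x => (1 / (1 + l ^ 2 - f x ^ 2) - 1 / (1 + deriv f x ^ 2)) * g x)
      = fun y => T y * g y := by
    funext y
    simp [hT_def, hu_def, hv_def, one_div]
  rw [hFeq]
  have hderivA : deriv (fun y => T y * g y) = fun x => S x * g x + T x * deriv g x :=
    funext fun x => (hA x).deriv
  -- now derivative of S at xt
  have hc1 : HasDerivAt (fun y => 2 * f y * deriv f y)
      (2 * deriv f xt * deriv f xt + 2 * f xt * deriv (deriv f) xt) xt := by
    have h := ((hf xt).hasDerivAt.const_mul (2 : ℝ)).fun_mul (hf' xt).hasDerivAt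
    convert h using 1
  have hd1 : HasDerivAt (fun y => u y ^ 2) (2 * u xt * -(2 * f xt * deriv f xt)) xt := by
    have h := (hU xt).fun_pow 2
    exact h.congr_deriv (by simp)
  have hP : HasDerivAt (fun y => 2 * f y * deriv f y / u y ^ 2)
      (((2 * deriv f xt * deriv f xt + 2 * f xt * deriv (deriv f) xt) * u xt ^ 2
        - 2 * f xt * deriv f xt * (2 * u xt * -(2 * f xt * deriv f xt))) / (u xt ^ 2) ^ 2) xt :=
    hc1.div hd1 (pow_ne_zero 2 (hu0 xt))
  have hc2 : HasDerivAt (fun y => 2 * deriv f y * deriv (deriv f) y)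
      (2 * deriv (deriv f) xt * deriv (deriv f) xt
        + 2 * deriv f xt * deriv (deriv (deriv f)) xt) xt := by
    have h := ((hf' xt).hasDerivAt.const_mul (2 : ℝ)).fun_mul (hf'' xt).hasDerivAt
    convert h using 1
  have hd2 : HasDerivAt (fun y => v y ^ 2)
      (2 * v xt * (2 * deriv f xt * deriv (deriv f) xt)) xt := by
    have h := (hV xt).fun_pow 2
    exact h.congr_deriv (by simp)
  have hQ : HasDerivAt (fun y => 2 * deriv f y * deriv (deriv f) y / v y ^ 2)
      (((2 * deriv (deriv f) xt * deriv (deriv f) xt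
          + 2 * deriv f xt * deriv (deriv (deriv f)) xt) * v xt ^ 2
        - 2 * deriv f xt * deriv (deriv f) xt
            * (2 * v xt * (2 * deriv f xt * deriv (deriv f) xt))) / (v xt ^ 2) ^ 2) xt :=
    hc2.div hd2 (pow_ne_zero 2 (hv0 xt))
  have hS' : HasDerivAt S
      (((2 * deriv f xt * deriv f xt + 2 * f xt * deriv (deriv f) xt) * u xt ^ 2
        - 2 * f xt * deriv f xt * (2 * u xt * -(2 * f xt * deriv f xt))) / (u xt ^ 2) ^ 2
      + ((2 * deriv (deriv f) xt * deriv (deriv f) xt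
          + 2 * deriv f xt * deriv (deriv (deriv f)) xt) * v xt ^ 2
        - 2 * deriv f xt * deriv (deriv f) xt
            * (2 * v xt * (2 * deriv f xt * deriv (deriv f) xt))) / (v xt ^ 2) ^ 2) xt :=
    hP.add hQ
  have hA' : HasDerivAt (fun x => S x * g x + T x * deriv g x)
      ((((2 * deriv f xt * deriv f xt + 2 * f xt * deriv (deriv f) xt) * u xt ^ 2
        - 2 * f xt * deriv f xt * (2 * u xt * -(2 * f xt * deriv f xt))) / (u xt ^ 2) ^ 2
      + ((2 * deriv (deriv f) xt * deriv (deriv f) xt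
          + 2 * deriv f xt * deriv (deriv (deriv f)) xt) * v xt ^ 2
        - 2 * deriv f xt * deriv (deriv f) xt
            * (2 * v xt * (2 * deriv f xt * deriv (deriv f) xt))) / (v xt ^ 2) ^ 2) * g xt
        + S xt * deriv g xt
        + (S xt * deriv g xt + T xt * deriv (deriv g) xt)) xt :=
    (hS'.mul (hg xt).hasDerivAt).add ((hT' xt).mul (hg' xt).hasDerivAt)
  refine ⟨(hA xt).differentiableAt, ?_, ?_⟩
  · rw [hderivA]
    exact hA'.differentiableAt
  · rw [hderivA, hA'.deriv]
    have huxt : u xt = 1 := by simp [hu_def, htouch]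
    have hvxt : v xt = 1 := by simp [hv_def, hslope]
    have hSxt : S xt = 0 := by simp [hS_def, hslope]
    have hTxt : T xt = 0 := by simp [hT_def, huxt, hvxt]
    rw [huxt, hvxt, hSxt, hTxt, htouch, hslope]
    ring
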